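/- Fix s > 0, b ∈ ℝ, γ > 1/2 and μ = 0. Then ν_ε / √ε converges, as ε → 0⁺, to the principal square root of s + i b (the unique square root of s + i b with positive real part), whose real and imaginary parts are (√2/2)(s + √(s² + b²))^{1/2} and (√2/2) b (s + √(s² + b²))^{−1/2} respectively. -/

import Mathlib

open Filter

/-- Let `ν_ε` be the unique root with positive real part of
`z² − ε^γ z − (ε^{1+μ} s + i ε b) = 0`.  For `s > 0`, `b ∈ ℝ`, `γ > 1/2`, `μ = 0`,
`ν_ε/√ε` converges as `ε → 0⁺` to the principal square root of `s + i b` (the unique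
square root with positive real part), whose real and imaginary parts are
`(√2/2)(s + √(s² + b²))^{1/2}` and `(√2/2) b (s + √(s² + b²))^{−1/2}`. -/
theorem stmt11 (s b γ μ : ℝ) (hs : 0 < s) (hγ : 1 / 2 < γ) (hμ : μ = 0)
    (nu : ℝ → ℂ)
    (hnu : ∀ ε : ℝ, 0 < ε →
      nu ε ^ 2 - ((ε ^ γ : ℝ) : ℂ) * nu ε
          - (((ε ^ (1 + μ) : ℝ) : ℂ) * (s : ℂ) + Complex.I * (ε : ℂ) * (b : ℂ)) = 0 ∧
        0 < (nu ε).re) :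
    let z : ℂ := ((Real.sqrt 2 / 2 * Real.sqrt (s + Real.sqrt (s ^ 2 + b ^ 2)) : ℝ) : ℂ) +
      Complex.I * ((Real.sqrt 2 / 2 * b * (Real.sqrt (s + Real.sqrt (s ^ 2 + b ^ 2)))⁻¹ : ℝ) : ℂ)
    z ^ 2 = (s : ℂ) + Complex.I * (b : ℂ) ∧ 0 < z.re ∧
      Tendsto (fun ε : ℝ => nu ε / ((Real.sqrt ε : ℝ) : ℂ))
        (nhdsWithin 0 (Set.Ioi 0)) (nhds z) := by
  have hb2 : (0:ℝ) ≤ s ^ 2 + b ^ 2 := by positivity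
  set R := Real.sqrt (s ^ 2 + b ^ 2) with hRdef
  have hR2 : R ^ 2 = s ^ 2 + b ^ 2 := Real.sq_sqrt hb2
  have hRpos : 0 ≤ R := Real.sqrt_nonneg _
  have hRs : s ≤ R := by nlinarith
  have hsR : 0 < s + R := by linarith
  set A := Real.sqrt (s + R) with hAdef
  have hA : 0 < A := Real.sqrt_pos.mpr hsR
  have hA2 : A ^ 2 = s + R := Real.sq_sqrt hsR.le
  set X := Real.sqrt 2 with hXdef
  have hX : 0 < X := Real.sqrt_pos.mpr (by norm_num)
  have h2 : X ^ 2 = 2 := Real.sq_sqrt (by norm_num)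
  intro z
  -- algebraic identities for the real and imaginary parts
  have ha2 : (X / 2 * A) ^ 2 = (s + R) / 2 := by
    rw [mul_pow, div_pow, h2, hA2]; ring
  have hc2 : (X / 2 * b * A⁻¹) ^ 2 = (R - s) / 2 := by
    have h1 : (X / 2 * b * A⁻¹) ^ 2 = X ^ 2 * b ^ 2 / (4 * A ^ 2) := by
      field_simp; ring
    rw [h1, h2, hA2, div_eq_div_iff (by positivity) (by norm_num)]
    linear_combination (-4 : ℝ) * hR2
  have hac : 2 * (X / 2 * A) * (X / 2 * b * A⁻¹) = b := by
    field_simp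
    linear_combination b * h2
  have expand : ∀ a c : ℝ, ((a : ℝ) : ℂ) + Complex.I * (c : ℂ) =
      Complex.mk a c := by
    intro a c; apply Complex.ext <;> simp
  have hz2 : z ^ 2 = (s : ℂ) + Complex.I * (b : ℂ) := by
    show (((X / 2 * A : ℝ) : ℂ) + Complex.I * ((X / 2 * b * A⁻¹ : ℝ) : ℂ)) ^ 2
      = (s : ℂ) + Complex.I * (b : ℂ)
    have key : ∀ a c : ℝ, (((a : ℝ) : ℂ) + Complex.I * (c : ℂ)) ^ 2
        = ((a ^ 2 - c ^ 2 : ℝ) : ℂ) + Complex.I * ((2 * a * c : ℝ) : ℂ) := by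
      intro a c
      push_cast
      linear_combination (c : ℂ) ^ 2 * Complex.I_sq
    rw [key]
    rw [show (X / 2 * A) ^ 2 - (X / 2 * b * A⁻¹) ^ 2 = s by rw [ha2, hc2]; ring,
      show 2 * (X / 2 * A) * (X / 2 * b * A⁻¹) = b from hac]
  have hzre : z.re = X / 2 * A := by
    show (((X / 2 * A : ℝ) : ℂ) + Complex.I * ((X / 2 * b * A⁻¹ : ℝ) : ℂ)).re = X / 2 * A
    simp
  have hzrepos : 0 < z.re := by
    rw [hzre]; exact mul_pos (div_pos hX two_pos) hA
  refine ⟨hz2, hzrepos, ?_⟩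
  -- Convergence
  set w : ℂ := (s : ℂ) + Complex.I * (b : ℂ) with hw
  set M : ℝ := ‖w‖ + 1 with hM
  have hM1 : 1 ≤ M := le_add_of_nonneg_left (norm_nonneg w)
  rw [tendsto_iff_norm_sub_tendsto_zero]
  have hp : 0 < γ - 1 / 2 := by linarith
  have key : ∀ ε ∈ Set.Ioo (0:ℝ) 1,
      ‖nu ε / ((Real.sqrt ε : ℝ) : ℂ) - z‖ ≤ (M / z.re) * ε ^ (γ - 1/2) := by
    intro ε hε
    obtain ⟨hε0, hε1⟩ := hε
    obtain ⟨heq, hre⟩ := hnu ε hε0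
    set u : ℂ := nu ε / ((Real.sqrt ε : ℝ) : ℂ) with hu
    have hsq : (0:ℝ) < Real.sqrt ε := Real.sqrt_pos.mpr hε0
    have hsqC : ((Real.sqrt ε : ℝ) : ℂ) ≠ 0 := by exact_mod_cast hsq.ne'
    have hε0C : (ε : ℂ) ≠ 0 := by exact_mod_cast hε0.ne'
    have hsqpow : ((Real.sqrt ε : ℝ) : ℂ) ^ 2 = (ε : ℂ) := by
      rw [← Complex.ofReal_pow, Real.sq_sqrt hε0.le]
    set δ : ℝ := ε ^ (γ - 1/2) with hδ
    have hδpos : 0 < δ := Real.rpow_pos_of_pos hε0 _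
    have hδ1 : δ ≤ 1 := (Real.rpow_lt_one hε0.le hε1 hp).le
    have hεγ : (ε ^ γ : ℝ) = δ * Real.sqrt ε := by
      rw [hδ, Real.sqrt_eq_rpow, ← Real.rpow_add hε0]
      norm_num
    have hμ1 : (ε ^ (1 + μ) : ℝ) = ε := by
      rw [hμ, add_zero, Real.rpow_one]
    rw [hμ1, hεγ] at heq
    have hgoal : (nu ε) ^ 2 = ((δ : ℝ) : ℂ) * ((Real.sqrt ε : ℝ) : ℂ) * nu ε
        + ((ε : ℂ) * s + Complex.I * ε * b) := by
      push_cast at heq ⊢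
      linear_combination heq
    have hequ : u ^ 2 = (δ : ℂ) * u + w := by
      have h1 : (ε : ℂ) * u ^ 2 = nu ε ^ 2 := by
        rw [hu, div_pow, hsqpow]
        field_simp
      have h2' : (ε : ℂ) * ((δ : ℂ) * u + w) = ((δ : ℝ) : ℂ) * ((Real.sqrt ε : ℝ) : ℂ) * nu ε
          + ((ε : ℂ) * s + Complex.I * ε * b) := by
        rw [hu, hw]
        field_simp
        linear_combination (-(δ : ℂ) * nu ε) * hsqpow
      have := h1.trans (hgoal.trans h2'.symm)
      exact mul_left_cancel₀ hε0C this
    have hure : 0 < u.re := by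
      rw [hu, Complex.div_ofReal_re]
      positivity
    have huz : u + z ≠ 0 := by
      intro hcon
      have h0 : (u + z).re = 0 := by rw [hcon]; simp
      rw [Complex.add_re] at h0
      linarith
    have hfac : u - z = (δ : ℂ) * u / (u + z) := by
      rw [eq_div_iff huz]
      have h3 : (u - z) * (u + z) = u ^ 2 - z ^ 2 := by ring
      rw [h3, hequ, hz2]
      ring
    have hubd : ‖u‖ ≤ M := by
      have h1 : ‖u‖ ^ 2 = ‖(δ:ℂ) * u + w‖ := by
        rw [← norm_pow, hequ]
      have h2' : ‖(δ:ℂ) * u + w‖ ≤ δ * ‖u‖ + ‖w‖ := by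
        calc ‖(δ:ℂ) * u + w‖ ≤ ‖(δ:ℂ) * u‖ + ‖w‖ :=
              norm_add_le _ _
          _ = δ * ‖u‖ + ‖w‖ := by
              rw [norm_mul, Complex.norm_real, Real.norm_eq_abs, abs_of_pos hδpos]
      have habs : (0:ℝ) ≤ ‖u‖ := norm_nonneg _
      nlinarith [norm_nonneg w]
    have hzuabs : z.re ≤ ‖u + z‖ := by
      calc z.re ≤ u.re + z.re := by linarith
        _ = (u + z).re := (Complex.add_re u z).symm
        _ ≤ ‖u + z‖ := Complex.re_le_norm _
    have hnorm : ‖u - z‖ = δ * ‖u‖ / ‖u + z‖ := by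
      rw [hfac]
      simp only [norm_div, norm_mul, Complex.norm_real, Real.norm_eq_abs,
        abs_of_pos hδpos]
    rw [hnorm, show (M / z.re) * δ = δ * M / z.re by ring]
    exact div_le_div₀ (by positivity)
      (mul_le_mul_of_nonneg_left hubd hδpos.le) hzrepos hzuabs
  have htend : Tendsto (fun ε : ℝ => (M / z.re) * ε ^ (γ - 1/2))
      (nhdsWithin 0 (Set.Ioi 0)) (nhds 0) := by
    have h0 : Tendsto (fun ε : ℝ => ε ^ (γ - 1/2)) (nhds 0) (nhds 0) := by
      have h := (Real.continuousAt_rpow_const 0 (γ - 1/2) (Or.inr hp.le)).tendsto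
      rwa [Real.zero_rpow hp.ne'] at h
    have h1 : Tendsto (fun ε : ℝ => ε ^ (γ - 1/2)) (nhdsWithin 0 (Set.Ioi 0)) (nhds 0) :=
      h0.mono_left nhdsWithin_le_nhds
    have h2'' := h1.const_mul (M / z.re)
    rwa [mul_zero] at h2''
  apply squeeze_zero'
  · filter_upwards with ε using norm_nonneg _
  · filter_upwards [Ioo_mem_nhdsGT_of_mem (Set.mem_Ico.mpr ⟨le_refl (0:ℝ), one_pos⟩)] with ε hε
      using key ε hε
  · exact htend
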